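/- Let A be a unital C*-algebra, C a C*-subalgebra of the center of A, J a closed ideal of C, and X a closed subspace of A that is a C-submodule (JX ⊆ X). Then for every x ∈ X, the distance from x to the closed linear span of JA equals the distance from x to the closed linear span of JX. -/

import Mathlib

open Filter Topology Set Metric
open Polynomial

set_option synthInstance.maxHeartbeats 1000000
set_option maxHeartbeats 2000000

lemma aux1 {A : Type*} [CStarAlgebra A] [PartialOrder A] [StarOrderedRing A]
    (h : A) (hh : 0 ≤ h) {δ : ℝ} (hδ : 0 < δ) :
    ‖1 - cfc (fun t => t / (t + δ)) h‖ ≤ 1 := by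
  have hspec : ∀ t ∈ spectrum ℝ h, (0:ℝ) ≤ t := fun t ht => spectrum_nonneg_of_nonneg hh ht
  have hsa : IsSelfAdjoint h := hh.isSelfAdjoint
  have hf : ContinuousOn (fun t : ℝ => t / (t + δ)) (spectrum ℝ h) := by
    apply ContinuousOn.div continuousOn_id (by fun_prop)
    intro t ht; have := hspec t ht; positivity
  rw [← cfc_one (R := ℝ) h, ← cfc_sub _ _ h (by fun_prop) hf]
  apply norm_cfc_le zero_le_one
  intro t ht
  have h0 := hspec t ht
  simp only [Pi.one_apply]
  have : (1:ℝ) - t / (t + δ) = δ / (t + δ) := by field_simp; ring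
  rw [this, Real.norm_eq_abs, abs_of_nonneg (by positivity)]
  rw [div_le_one (by positivity)]; linarith

lemma aux2 {A : Type*} [CStarAlgebra A] [PartialOrder A] [StarOrderedRing A]
    (h : A) (hh : 0 ≤ h) {δ : ℝ} (hδ : 0 < δ) (j : A) (hj : star j * j ≤ h)
    (hcomm : j * star j = star j * j) :
    ‖(1 - cfc (fun t => t / (t + δ)) h) * j‖ ≤ Real.sqrt δ := by
  have hspec : ∀ t ∈ spectrum ℝ h, (0:ℝ) ≤ t := fun t ht => spectrum_nonneg_of_nonneg hh ht
  have hsa : IsSelfAdjoint h := hh.isSelfAdjoint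
  set f : ℝ → ℝ := fun t => t / (t + δ) with hfdef
  have hf : ContinuousOn f (spectrum ℝ h) := by
    apply ContinuousOn.div continuousOn_id (by fun_prop)
    intro t ht; have := hspec t ht; positivity
  set e : A := cfc f h with hedef
  have hesa : IsSelfAdjoint e := by
    have : ∀ t ∈ spectrum ℝ h, f t = f t := fun _ _ => rfl
    exact cfc_predicate f h
  have h1e : star (1 - e) = 1 - e := by
    rw [star_sub, star_one, hesa.star_eq]
  -- ‖a‖² = ‖a * star a‖
  have key : ((1 - e) * j) * star ((1 - e) * j) = (1-e) * (star j * j) * (1-e) := by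
    rw [star_mul, h1e, show (1 - e) * j * (star j * (1 - e)) = (1-e) * (j * star j) * (1-e) by
      noncomm_ring, hcomm]
  have hconj : (1-e) * (star j * j) * (1-e) ≤ (1-e) * h * (1-e) := by
    have := star_left_conjugate_le_conjugate hj (1 - e)
    rwa [h1e] at this
  have h1f : ContinuousOn (fun t : ℝ => 1 - f t) (spectrum ℝ h) := continuousOn_const.sub hf
  have h1 : (1 : A) - e = cfc (fun t : ℝ => 1 - f t) h := by
    rw [cfc_sub _ _ h continuousOn_const hf, cfc_const_one ℝ h]
  have hmid : ‖(1-e) * h * (1-e)‖ ≤ δ := by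
    have heq : cfc (fun t => ((1 - f t) * t) * (1 - f t)) h = (1-e) * h * (1-e) := by
      rw [cfc_mul (fun t => (1 - f t) * t) (fun t => 1 - f t) h
            (h1f.mul continuousOn_id) h1f,
          cfc_mul (fun t => 1 - f t) (fun t => t) h h1f continuousOn_id,
          cfc_id' ℝ h, ← h1]
    rw [← heq]
    apply norm_cfc_le hδ.le
    intro t ht
    have h0 := hspec t ht
    have h1' : (1:ℝ) - f t = δ / (t + δ) := by rw [hfdef]; field_simp; ring
    rw [h1', Real.norm_eq_abs, abs_of_nonneg (by positivity), div_mul_eq_mul_div,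
      div_mul_div_comm, div_le_iff₀ (by positivity)]
    nlinarith [sq_nonneg t, sq_nonneg δ, mul_nonneg h0 hδ.le]
  have hnn : ‖(1-e)*j‖ * ‖(1-e)*j‖ ≤ δ := by
    calc ‖(1-e)*j‖ * ‖(1-e)*j‖ = ‖((1-e)*j) * star ((1-e)*j)‖ := (CStarRing.norm_self_mul_star).symm
    _ = ‖(1-e) * (star j * j) * (1-e)‖ := by rw [key]
    _ ≤ ‖(1-e) * h * (1-e)‖ := by
        apply CStarAlgebra.norm_le_norm_of_nonneg_of_le _ hconj
        · rw [← key]; exact mul_star_self_nonneg _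
    _ ≤ δ := hmid
  nlinarith [norm_nonneg ((1-e)*j), Real.sq_sqrt hδ.le, Real.sqrt_nonneg δ,
    sq_nonneg (‖(1-e)*j‖ - Real.sqrt δ)]

lemma aux3 {A : Type*} [CStarAlgebra A] [PartialOrder A] [StarOrderedRing A] [Nontrivial A]
    (h : A) (hh : 0 ≤ h) {δ ε : ℝ} (hδ : 0 < δ) (hε : 0 < ε) :
    ∃ p : ℝ[X], ‖cfc (fun t : ℝ => t / (t + δ)) h - aeval h (p * X)‖ < ε := by
  have hsa : IsSelfAdjoint h := hh.isSelfAdjoint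
  have hspec : ∀ t ∈ spectrum ℝ h, (0:ℝ) ≤ t := fun t ht => spectrum_nonneg_of_nonneg hh ht
  have hf : ContinuousOn (fun t : ℝ => t / (t + δ)) (spectrum ℝ h) := by
    apply ContinuousOn.div continuousOn_id (by fun_prop)
    intro t ht; have := hspec t ht; positivity
  set R' : ℝ := ‖h‖ with hR'
  have hR0 : 0 ≤ R' := norm_nonneg h
  have hg : ContinuousOn (fun t : ℝ => 1 / (t + δ)) (Set.Icc 0 R') := by
    apply ContinuousOn.div continuousOn_const (by fun_prop)
    intro t ht; have := ht.1; positivity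
  obtain ⟨p, hp⟩ := exists_polynomial_near_of_continuousOn 0 R' _ hg (ε / (R' + 1))
    (by positivity)
  refine ⟨p, ?_⟩
  rw [← cfc_polynomial (p * X) h, ← cfc_sub _ _ h hf (p * X).continuous_aeval.continuousOn]
  have hle : ‖cfc (fun t : ℝ => t / (t + δ) - (p * X).eval t) h‖ ≤ R' * (ε / (R' + 1)) := by
    apply norm_cfc_le (by positivity)
    intro t ht
    have h0 := hspec t ht
    have h1 : t ≤ R' := by
      have := spectrum.norm_le_norm_of_mem ht
      rwa [Real.norm_eq_abs, abs_of_nonneg h0] at this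
    have h2 : t / (t + δ) - (p * X).eval t = t * (1 / (t + δ) - p.eval t) := by
      simp [Polynomial.eval_mul]; ring
    rw [h2, Real.norm_eq_abs, abs_mul, abs_of_nonneg h0]
    have h3 : |1 / (t + δ) - p.eval t| ≤ ε / (R' + 1) := by
      have := hp t ⟨h0, h1⟩
      rw [abs_sub_comm]; exact this.le
    exact mul_le_mul h1 h3 (abs_nonneg _) hR0
  refine lt_of_le_of_lt hle ?_
  rw [mul_div_assoc', div_lt_iff₀ (by positivity)]
  nlinarith


/-- Let `A` be a unital C*-algebra, `C` a C*-subalgebra of the center of `A`,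
`J` a closed ideal of `C`, and `X` a closed subspace of `A` which is a `C`-submodule.  Then
for every `x ∈ X`, the distance from `x` to the closed linear span `[JA]` equals the distance
from `x` to the closed linear span `[JX]`. -/
theorem stmt_1 {A : Type*} [NormedRing A] [StarRing A] [CStarRing A]
    [NormedAlgebra ℂ A] [CompleteSpace A] [StarModule ℂ A]
    (C : StarSubalgebra ℂ A) (hC : (C : Set A) ⊆ Set.center A)
    (J : Ideal ↥C) (hJclosed : IsClosed (J : Set ↥C))
    (X : Submodule ℂ A) (hXclosed : IsClosed (X : Set A))
    (hmod : ∀ c : ↥C, ∀ x ∈ X, (c : A) * x ∈ X)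
    (x : A) (hx : x ∈ X) :
    Metric.infDist x
        (closure (Submodule.span ℂ {y : A | ∃ j : ↥C, j ∈ J ∧ ∃ a : A, y = (j : A) * a} : Set A)) =
      Metric.infDist x
        (closure
          (Submodule.span ℂ {y : A | ∃ j : ↥C, j ∈ J ∧ ∃ a ∈ X, y = (j : A) * a} : Set A)) := by
  letI : CStarAlgebra A := ⟨⟩
  letI := CStarAlgebra.spectralOrder A
  haveI := CStarAlgebra.spectralOrderedRing A
  set setA : Set A := {y : A | ∃ j : ↥C, j ∈ J ∧ ∃ a : A, y = (j : A) * a} with hsetA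
  set setX : Set A := {y : A | ∃ j : ↥C, j ∈ J ∧ ∃ a ∈ X, y = (j : A) * a} with hsetX
  set SA := Submodule.span ℂ setA with hSA
  set SX := Submodule.span ℂ setX with hSX
  rcases subsingleton_or_nontrivial A with hsub | hnt
  · have h1 : x ∈ closure (SA : Set A) := subset_closure (by
      rw [Subsingleton.elim x 0]; exact zero_mem _)
    have h2 : x ∈ closure (SX : Set A) := subset_closure (by
      rw [Subsingleton.elim x 0]; exact zero_mem _)
    rw [Metric.infDist_zero_of_mem h1, Metric.infDist_zero_of_mem h2]
  -- easy direction
  have hsub1 : Metric.infDist x (closure (SA : Set A)) ≤ Metric.infDist x (closure (SX : Set A)) := by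
    apply Metric.infDist_le_infDist_of_subset
    · apply closure_mono
      apply Submodule.span_mono
      rintro y ⟨j, hj, a, _, rfl⟩
      exact ⟨j, hj, a, rfl⟩
    · exact ⟨0, subset_closure (zero_mem _)⟩
  -- hard direction
  have key : ∀ y ∈ SA, ∀ ε > 0, ∃ z ∈ closure (SX : Set A), dist x z ≤ dist x y + ε := by
    intro y hy ε hε
    rw [hSA, Submodule.mem_span_set'] at hy
    obtain ⟨n, c, v, hsum⟩ := hy
    have hv : ∀ i, ∃ j : ↥C, j ∈ J ∧ ∃ a : A, (v i : A) = (j : A) * a := fun i => (v i).2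
    choose j hjJ a hva using hv
    set M : ℝ := ∑ i, ‖c i‖ * ‖a i‖ with hM
    have hM0 : 0 ≤ M := Finset.sum_nonneg fun i _ => by positivity
    set δ : ℝ := (ε / (2 * (M + 1))) ^ 2 with hδdef
    have hδ : 0 < δ := by positivity
    set hh : ↥C := ∑ i, star (j i) * (j i) with hhdef
    have hhJ : hh ∈ J := Ideal.sum_mem _ fun i _ => J.mul_mem_left (star (j i)) (hjJ i)
    set h' : A := (hh : A) with h'def
    have hcoe : h' = ∑ i, star ((j i : A)) * (j i : A) := by
      rw [h'def, hhdef]; push_cast; rfl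
    have hh0 : 0 ≤ h' := by
      rw [hcoe]; exact Finset.sum_nonneg fun i _ => star_mul_self_nonneg _
    set e : A := cfc (fun t : ℝ => t / (t + δ)) h' with hedef
    have he1 : ‖1 - e‖ ≤ 1 := aux1 h' hh0 hδ
    have he2 : ∀ i, ‖(1 - e) * (j i : A)‖ ≤ Real.sqrt δ := by
      intro i
      apply aux2 h' hh0 hδ
      · rw [hcoe]
        exact Finset.single_le_sum (f := fun i => star ((j i : A)) * (j i : A))
          (fun i _ => star_mul_self_nonneg _) (Finset.mem_univ i)
      · have hcen : (j i : A) ∈ Set.center A := hC (j i).2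
        exact (Set.mem_center_iff.mp hcen).comm (star ((j i : A)))
    -- e is in the closure of the image of J
    have hemem : e ∈ closure ((fun k : ↥C => (k : A)) '' (J : Set ↥C)) := by
      rw [Metric.mem_closure_iff]
      intro ε' hε'
      obtain ⟨p, hp⟩ := aux3 h' hh0 hδ hε'
      refine ⟨((aeval hh (p * Polynomial.X) : ↥C) : A), ⟨aeval hh (p * Polynomial.X), ?_, rfl⟩, ?_⟩
      · rw [map_mul, Polynomial.aeval_X]
        exact J.mul_mem_left _ hhJ
      · have hφ : ((aeval hh (p * Polynomial.X) : ↥C) : A) = aeval h' (p * Polynomial.X) := by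
          have := Polynomial.aeval_algHom_apply ((C.subtype).restrictScalars ℝ) hh (p * Polynomial.X)
          exact this.symm
        rw [hφ, dist_eq_norm]
        exact hp
    have hz : e * x ∈ closure (SX : Set A) := by
      apply map_mem_closure (continuous_mul_right x) hemem
      rintro w ⟨k, hk, rfl⟩
      exact Submodule.subset_span ⟨k, hk, x, hx, rfl⟩
    refine ⟨e * x, hz, ?_⟩
    have hstep1 : x - e * x = (1 - e) * (x - y) + (1 - e) * y := by noncomm_ring
    have hy2 : (1 - e) * y = ∑ i, c i • (((1 - e) * (j i : A)) * a i) := by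
      rw [← hsum, Finset.mul_sum]
      congr 1; funext i
      rw [mul_smul_comm, hva i]; noncomm_ring
    have hbound : ‖(1 - e) * y‖ ≤ ε := by
      rw [hy2]
      calc ‖∑ i, c i • (((1 - e) * (j i : A)) * a i)‖
          ≤ ∑ i, ‖c i • (((1 - e) * (j i : A)) * a i)‖ := norm_sum_le _ _
        _ ≤ ∑ i, ‖c i‖ * (Real.sqrt δ * ‖a i‖) := by
            apply Finset.sum_le_sum
            intro i _
            rw [norm_smul]
            gcongr
            calc ‖((1 - e) * (j i : A)) * a i‖ ≤ ‖(1 - e) * (j i : A)‖ * ‖a i‖ := norm_mul_le _ _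
              _ ≤ Real.sqrt δ * ‖a i‖ := by gcongr; exact he2 i
        _ = Real.sqrt δ * M := by rw [hM, Finset.mul_sum]; congr 1; funext i; ring
        _ ≤ ε := by
            rw [hδdef, Real.sqrt_sq (by positivity)]
            rw [div_mul_eq_mul_div, div_le_iff₀ (by positivity)]
            nlinarith
    calc dist x (e * x) = ‖x - e * x‖ := dist_eq_norm _ _
      _ ≤ ‖(1 - e) * (x - y)‖ + ‖(1 - e) * y‖ := by rw [hstep1]; exact norm_add_le _ _
      _ ≤ ‖1 - e‖ * ‖x - y‖ + ε := by gcongr; exact norm_mul_le _ _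
      _ ≤ 1 * ‖x - y‖ + ε := by gcongr
      _ = dist x y + ε := by rw [one_mul, dist_eq_norm]
  -- combine
  have hsub2 : Metric.infDist x (closure (SX : Set A)) ≤ Metric.infDist x (closure (SA : Set A)) := by
    rw [Metric.infDist_closure (s := (SA : Set A))]
    apply le_of_forall_pos_le_add
    intro ε hε
    have hne : (SA : Set A).Nonempty := ⟨0, zero_mem _⟩
    have hlt : Metric.infDist x (SA : Set A) < Metric.infDist x (SA : Set A) + ε / 2 := by linarith
    obtain ⟨y, hy, hdy⟩ := (Metric.infDist_lt_iff hne).mp hlt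
    obtain ⟨z, hz, hdz⟩ := key y hy (ε / 2) (by linarith)
    have := Metric.infDist_le_dist_of_mem (x := x) hz
    linarith
  linarith
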